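/- Let φ ∈ 𝒮(ℝⁿ) (Schwartz space) with ∫ φ dx = 0. Then there exist φ₁,…,φₙ ∈ 𝒮(ℝⁿ) such that φ = Σ_k ∂_k φ_k. -/

import Mathlib

set_option synthInstance.maxHeartbeats 1000000
set_option maxHeartbeats 1000000
open scoped ContDiff FourierTransform RealInnerProductSpace
open MeasureTheory Real Complex SchwartzMap Metric intervalIntegral

noncomputable section

namespace SchwartzMap

/-- Partial derivative along `m` on Schwartz space. -/
def pderivCLM (𝕜 : Type) [RCLike 𝕜] {E F : Type*} [NormedAddCommGroup E] [NormedSpace ℝ E]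
    [NormedAddCommGroup F] [NormedSpace ℝ F] [NormedSpace 𝕜 F] [SMulCommClass ℝ 𝕜 F] (m : E) :
    𝓢(E, F) →L[𝕜] 𝓢(E, F) :=
  LineDeriv.lineDerivOpCLM 𝕜 𝓢(E, F) m

theorem pderivCLM_apply (𝕜 : Type) [RCLike 𝕜] {E F : Type*} [NormedAddCommGroup E]
    [NormedSpace ℝ E] [NormedAddCommGroup F] [NormedSpace ℝ F] [NormedSpace 𝕜 F]
    [SMulCommClass ℝ 𝕜 F] (m : E) (f : 𝓢(E, F)) (x : E) :
    pderivCLM 𝕜 m f x = fderiv ℝ f x m := rfl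

end SchwartzMap

namespace Stmt15

variable {d : ℕ}

local notation "V" => EuclideanSpace ℝ (Fin d)

universe u
variable {E : Type u} [NormedAddCommGroup E] [NormedSpace ℝ E] [CompleteSpace E]

/-- Parametric dilation integral. -/
def S (m : ℕ) (f : 𝓢(V, E)) (ξ : V) : E := ∫ t in (0:ℝ)..1, t ^ m • f (t • ξ)

lemma continuous_aux (m : ℕ) (f : 𝓢(V, E)) (x : V) :
    Continuous fun t : ℝ => t ^ m • f (t • x) := by
  fun_prop

lemma hasFDerivAt_S (m : ℕ) (f : 𝓢(V, E)) (x : V) :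
    HasFDerivAt (S m f)
      (∫ t in (0:ℝ)..1, t ^ (m+1) • ((fderivCLM ℝ V E f) (t • x) : V →L[ℝ] E)) x := by
  have key := intervalIntegral.hasFDerivAt_integral_of_dominated_of_fderiv_le
    (F := fun (y : V) (t : ℝ) => t ^ m • f (t • y))
    (F' := fun (y : V) (t : ℝ) => t ^ (m+1) • ((fderivCLM ℝ V E f) (t • y) : V →L[ℝ] E))
    (x₀ := x) (a := (0:ℝ)) (b := 1) (μ := volume)
    (bound := fun _ => (SchwartzMap.seminorm ℝ 0 0) (fderivCLM ℝ V E f))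
    (ball_mem_nhds x one_pos) ?_ ?_ ?_ ?_ ?_ ?_
  · exact key
  · filter_upwards with y
    exact (continuous_aux m f y).aestronglyMeasurable
  · exact (continuous_aux m f x).intervalIntegrable 0 1
  · apply Continuous.aestronglyMeasurable
    fun_prop
  · filter_upwards with t ht y hy
    refine (norm_smul_le (t ^ (m+1)) ((fderivCLM ℝ V E f) (t • y))).trans ?_
    have h1 : ‖t ^ (m+1)‖ ≤ 1 := by
      rw [Set.uIoc_of_le (by norm_num : (0:ℝ) ≤ 1)] at ht
      have h2 : 0 < t ∧ t ≤ 1 := ⟨ht.1, ht.2⟩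
      rw [norm_pow, Real.norm_eq_abs, abs_of_pos h2.1]
      exact pow_le_one₀ h2.1.le h2.2
    calc ‖t ^ (m+1)‖ * ‖(fderivCLM ℝ V E f) (t • y)‖
        ≤ 1 * ‖(fderivCLM ℝ V E f) (t • y)‖ := by gcongr
      _ = ‖(fderivCLM ℝ V E f) (t • y)‖ := one_mul _
      _ ≤ _ := SchwartzMap.norm_le_seminorm ℝ _ _
  · exact intervalIntegrable_const
  · filter_upwards with t _ y _
    have h1 : HasFDerivAt (fun z : V => t • z) (t • ContinuousLinearMap.id ℝ V) y :=
      ((t : ℝ) • ContinuousLinearMap.id ℝ V).hasFDerivAt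
    have h2 : HasFDerivAt (fun z : V => f (t • z))
        ((fderiv ℝ f (t • y)).comp (t • ContinuousLinearMap.id ℝ V)) y :=
      (f.differentiableAt.hasFDerivAt).comp y h1
    have h3 := h2.const_smul (t ^ m)
    convert h3 using 1
    ext v
    simp only [ContinuousLinearMap.smul_apply, ContinuousLinearMap.coe_comp', Function.comp_apply,
      ContinuousLinearMap.coe_id', Pi.smul_apply, ContinuousLinearMap.id_apply,
      SchwartzMap.fderivCLM_apply, pow_succ]
    ext v
    simp only [ContinuousLinearMap.smul_apply, ContinuousLinearMap.coe_comp', Function.comp_apply,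
      ContinuousLinearMap.id_apply, SchwartzMap.fderivCLM_apply, map_smul, pow_succ, mul_smul]

lemma fderiv_S (m : ℕ) (f : 𝓢(V, E)) :
    fderiv ℝ (S m f) = S (m+1) (fderivCLM ℝ V E f) :=
  funext fun x => (hasFDerivAt_S m f x).fderiv

lemma differentiable_S (m : ℕ) (f : 𝓢(V, E)) : Differentiable ℝ (S m f) :=
  fun x => (hasFDerivAt_S m f x).differentiableAt

lemma contDiff_S (N : ℕ) :
    ∀ {E' : Type u} [NormedAddCommGroup E'] [NormedSpace ℝ E'] [CompleteSpace E']
      (m : ℕ) (f : 𝓢(V, E')), ContDiff ℝ N (S m f) := by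
  induction N with
  | zero =>
    intro E' _ _ _ m f
    exact contDiff_zero.2 (differentiable_S m f).continuous
  | succ N ih =>
    intro E' _ _ _ m f
    have : ((N + 1 : ℕ) : WithTop ℕ∞) = (N : WithTop ℕ∞) + 1 := by push_cast; ring
    rw [this, contDiff_succ_iff_fderiv]
    refine ⟨differentiable_S m f, by simp, ?_⟩
    rw [fderiv_S]
    exact ih _ _

lemma contDiff_infty_S (m : ℕ) (f : 𝓢(V, E)) : ContDiff ℝ ∞ (S m f) := by
  rw [contDiff_infty]
  intro N
  exact contDiff_S N m f

lemma norm_iteratedFDeriv_S_le (N : ℕ) :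
    ∀ {E' : Type u} [NormedAddCommGroup E'] [NormedSpace ℝ E'] [CompleteSpace E']
      (m : ℕ) (f : 𝓢(V, E')) (x : V),
      ‖iteratedFDeriv ℝ N (S m f) x‖ ≤ (SchwartzMap.seminorm ℝ 0 N) f := by
  induction N with
  | zero =>
    intro E' _ _ _ m f x
    rw [norm_iteratedFDeriv_zero]
    refine (intervalIntegral.norm_integral_le_of_norm_le_const (C := (SchwartzMap.seminorm ℝ 0 0) f)
      ?_).trans (by norm_num)
    intro t ht
    rw [Set.uIoc_of_le (by norm_num : (0:ℝ) ≤ 1)] at ht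
    refine (norm_smul_le (t ^ m) (f (t • x))).trans ?_
    have h1 : ‖t ^ m‖ ≤ 1 := by
      rw [norm_pow, Real.norm_eq_abs, abs_of_pos ht.1]
      exact pow_le_one₀ ht.1.le ht.2
    calc ‖t ^ m‖ * ‖f (t • x)‖ ≤ 1 * ‖f (t • x)‖ := by
          gcongr
      _ = ‖f (t • x)‖ := one_mul _
      _ ≤ _ := SchwartzMap.norm_le_seminorm ℝ _ _
  | succ N ih =>
    intro E' _ _ _ m f x
    rw [← norm_iteratedFDeriv_fderiv, fderiv_S]
    refine le_trans ?_ (?_ : (SchwartzMap.seminorm ℝ 0 N) (fderivCLM ℝ V E' f) ≤ _)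
    · exact ih (m+1) (fderivCLM ℝ V E' f) x
    refine SchwartzMap.seminorm_le_bound ℝ 0 N (fderivCLM ℝ V E' f) (apply_nonneg _ _) ?_
    intro y
    rw [pow_zero, one_mul]
    have hco : ⇑(fderivCLM ℝ V E' f) = fderiv ℝ ⇑f := funext fun z => SchwartzMap.fderivCLM_apply ℝ f z
    rw [hco, norm_iteratedFDeriv_fderiv]
    exact SchwartzMap.norm_iteratedFDeriv_le_seminorm ℝ f (N+1) y
lemma hasTemperateGrowth_S (m : ℕ) (f : 𝓢(V, E)) : Function.HasTemperateGrowth (S m f) := by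
  refine ⟨contDiff_infty_S m f, fun N => ⟨0, (SchwartzMap.seminorm ℝ 0 N) f, fun x => ?_⟩⟩
  simpa using norm_iteratedFDeriv_S_le N m f x

lemma sum_coord_smul_S (f : 𝓢(V, E)) (ξ : V) :
    f ξ - f 0 = ∑ k, ξ k • S 0 (pderivCLM ℝ (EuclideanSpace.single k (1:ℝ)) f) ξ := by
  have hgamma : ∀ t ∈ Set.uIcc (0:ℝ) 1,
      HasDerivAt (fun s : ℝ => f (s • ξ)) (fderiv ℝ f (t • ξ) ξ) t := by
    intro t _
    have h1 : HasDerivAt (fun s : ℝ => s • ξ) ξ t := by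
      simpa using (hasDerivAt_id t).smul_const ξ
    exact (f.differentiableAt.hasFDerivAt).comp_hasDerivAt t h1
  have hc : Continuous (fderiv ℝ (⇑f)) := f.smooth'.continuous_fderiv (by simp)
  have hc2 : ∀ v : V, Continuous fun t : ℝ => fderiv ℝ (⇑f) (t • ξ) v := fun v =>
    (ContinuousLinearMap.apply ℝ E v).continuous.comp
      (hc.comp ((continuous_id.smul (continuous_const : Continuous fun _ : ℝ => ξ))))
  have h2 : f ξ - f 0 = ∫ t in (0:ℝ)..1, fderiv ℝ f (t • ξ) ξ := by
    rw [intervalIntegral.integral_eq_sub_of_hasDerivAt hgamma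
      (Continuous.intervalIntegrable (hc2 ξ) 0 1)]
    simp
  rw [h2]
  have hξ : ξ = ∑ k, ξ k • EuclideanSpace.single k (1:ℝ) := by
    have := (EuclideanSpace.basisFun (Fin d) ℝ).sum_repr ξ
    simp only [EuclideanSpace.basisFun_apply, EuclideanSpace.basisFun_repr] at this
    exact this.symm
  have hdecomp : ∀ y : V, fderiv ℝ (⇑f) y ξ
      = ∑ k, ξ k • fderiv ℝ (⇑f) y (EuclideanSpace.single k (1:ℝ)) := by
    intro y
    conv_lhs => rw [hξ]
    rw [map_sum]
    exact Finset.sum_congr rfl fun k _ => (fderiv ℝ (⇑f) y).map_smul _ _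
  calc (∫ t in (0:ℝ)..1, fderiv ℝ f (t • ξ) ξ)
      = ∫ t in (0:ℝ)..1, ∑ k, ξ k • fderiv ℝ (⇑f) (t • ξ) (EuclideanSpace.single k (1:ℝ)) := by
        congr 1; funext t; exact hdecomp (t • ξ)
    _ = ∑ k, ∫ t in (0:ℝ)..1, ξ k • fderiv ℝ (⇑f) (t • ξ) (EuclideanSpace.single k (1:ℝ)) := by
        apply intervalIntegral.integral_finset_sum
        intro k _
        exact Continuous.intervalIntegrable ((hc2 _).const_smul _) 0 1
    _ = ∑ k, ξ k • S 0 (pderivCLM ℝ (EuclideanSpace.single k (1:ℝ)) f) ξ := by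
        refine Finset.sum_congr rfl fun k _ => ?_
        rw [intervalIntegral.integral_smul]
        congr 1
        simp [S, SchwartzMap.pderivCLM_apply]

/-- A smooth compactly supported function is a Schwartz function. -/
def ofCompactSupport (f : EuclideanSpace ℝ (Fin d) → ℂ) (hf : ContDiff ℝ ∞ f)
    (hsupp : HasCompactSupport f) : 𝓢(EuclideanSpace ℝ (Fin d), ℂ) where
  toFun := f
  smooth' := hf
  decay' := by
    intro k N
    have h1 : HasCompactSupport (fun x => ‖x‖ ^ k * ‖iteratedFDeriv ℝ N f x‖) := by
      apply HasCompactSupport.mul_left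
      exact (hsupp.iteratedFDeriv N).norm
    have h2 : Continuous (fun x => ‖x‖ ^ k * ‖iteratedFDeriv ℝ N f x‖) := by
      apply Continuous.mul (by fun_prop)
      exact (hf.continuous_iteratedFDeriv (by exact_mod_cast le_top)).norm
    obtain ⟨C, hC⟩ := h2.bounded_above_of_compact_support h1
    exact ⟨C, fun x => by simpa [Real.norm_eq_abs, _root_.abs_of_nonneg (by positivity : (0:ℝ) ≤ ‖x‖ ^ k * ‖iteratedFDeriv ℝ N f x‖)] using hC x⟩

variable (d) in
/-- A concrete bump function. -/
def bump0 : ContDiffBump (0 : EuclideanSpace ℝ (Fin d)) := ⟨1, 2, one_pos, one_lt_two⟩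

variable (d) in
/-- A concrete Schwartz function equal to `1` at the origin. -/
def wbump : 𝓢(EuclideanSpace ℝ (Fin d), ℂ) :=
  ofCompactSupport (fun x => ((bump0 d) x : ℂ))
    (Complex.ofRealCLM.contDiff.comp (bump0 d).contDiff)
    ((bump0 d).hasCompactSupport.comp_left (g := (Complex.ofReal : ℝ → ℂ)) Complex.ofReal_zero)

lemma wbump_zero : wbump d 0 = 1 := by
  have h : (bump0 d) 0 = 1 := (bump0 d).one_of_mem_closedBall (by
    simp only [Metric.mem_closedBall, dist_self]
    exact (bump0 d).rIn_pos.le)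
  show (((bump0 d) 0 : ℝ) : ℂ) = 1
  rw [h]; norm_num

section Fourier

variable {d : ℕ}

lemma fourier_pderiv (ψ : 𝓢(EuclideanSpace ℝ (Fin d), ℂ)) (v ξ : EuclideanSpace ℝ (Fin d)) :
    𝓕 (⇑(pderivCLM ℝ v ψ)) ξ = (2 * π * Complex.I * ((⟪ξ, v⟫ : ℝ) : ℂ)) * 𝓕 (⇑ψ) ξ := by
  have hco : ⇑(fderivCLM ℝ (EuclideanSpace ℝ (Fin d)) ℂ ψ) = fderiv ℝ (⇑ψ) := funext fun z => SchwartzMap.fderivCLM_apply ℝ ψ z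
  have hint : Integrable (fderiv ℝ (⇑ψ)) := by rw [← hco]; exact (fderivCLM ℝ (EuclideanSpace ℝ (Fin d)) ℂ ψ).integrable
  have h1 := Real.fourier_fderiv ψ.integrable ψ.differentiable hint
  have h2 : 𝓕 (⇑(pderivCLM ℝ v ψ)) ξ = 𝓕 (fderiv ℝ (⇑ψ)) ξ v := by
    rw [Real.fourier_continuousLinearMap_apply hint]
    rfl
  rw [h2, h1]
  simp only [VectorFourier.fourierSMulRight_apply, ContinuousLinearMap.neg_apply,
    innerSL_apply_apply, smul_eq_mul, neg_smul, smul_smul]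
  rw [Complex.real_smul]
  push_cast
  rw [show (innerSL ℝ ξ) v = ⟪ξ, v⟫ from rfl]
  ring

lemma fourier_at_zero (ψ : 𝓢(EuclideanSpace ℝ (Fin d), ℂ)) :
    𝓕 (⇑ψ) 0 = ∫ x, ψ x := by
  rw [Real.fourier_eq]
  simp

end Fourier

lemma schwartz_sum_apply {ι : Type} (s : Finset ι) {E F : Type*} [NormedAddCommGroup E]
    [NormedSpace ℝ E] [NormedAddCommGroup F] [NormedSpace ℝ F]
    (f : ι → 𝓢(E, F)) (x : E) : (∑ i ∈ s, f i) x = ∑ i ∈ s, f i x := by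
  calc (∑ i ∈ s, f i) x = ((FunLike.coeAddMonoidHom 𝓢(E, F) E F) (∑ i ∈ s, f i)) x := rfl
    _ = (∑ i ∈ s, (f i : E → F)) x := by rw [map_sum]; rfl
    _ = _ := Finset.sum_apply _ _ _

theorem euclid (d : ℕ) (φ : 𝓢(EuclideanSpace ℝ (Fin d), ℂ)) (hφ : ∫ x, φ x = 0) :
    ∃ ψ : Fin d → 𝓢(EuclideanSpace ℝ (Fin d), ℂ),
      ∀ x, φ x = ∑ k, pderivCLM ℝ (EuclideanSpace.single k (1:ℝ)) (ψ k) x := by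
  classical
  have h2pi : (2 * (π:ℂ) * Complex.I) ≠ 0 := by
    simp [Real.pi_ne_zero, Complex.I_ne_zero, Complex.ofReal_ne_zero]
  let F : 𝓢(EuclideanSpace ℝ (Fin d), ℂ) ≃L[ℂ] 𝓢(EuclideanSpace ℝ (Fin d), ℂ) :=
    FourierTransform.fourierCLE ℂ 𝓢(EuclideanSpace ℝ (Fin d), ℂ)
  let G : 𝓢(EuclideanSpace ℝ (Fin d), ℂ) := F φ
  have hG0 : G 0 = 0 := by
    have h1 : G 0 = 𝓕 (⇑φ) 0 := by
      show (F φ) 0 = _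
      rfl
    rw [h1, fourier_at_zero, hφ]
  let w := wbump d
  let a : Fin d → EuclideanSpace ℝ (Fin d) → ℂ :=
    fun k => S 0 (pderivCLM ℝ (EuclideanSpace.single k (1:ℝ)) G)
  let c : Fin d → EuclideanSpace ℝ (Fin d) → ℂ :=
    fun k => S 0 (pderivCLM ℝ (EuclideanSpace.single k (1:ℝ)) w)
  let B := ContinuousLinearMap.mul ℝ ℂ
  let h : Fin d → 𝓢(EuclideanSpace ℝ (Fin d), ℂ) := fun k =>
    bilinLeftCLM B (hasTemperateGrowth_S 0 (pderivCLM ℝ (EuclideanSpace.single k (1:ℝ)) G)) w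
    - bilinLeftCLM B (hasTemperateGrowth_S 0 (pderivCLM ℝ (EuclideanSpace.single k (1:ℝ)) w)) G
  have h_apply : ∀ k ξ, h k ξ = w ξ * a k ξ - G ξ * c k ξ := by
    intro k ξ
    rfl
  have hk_eq : ∀ ξ, ∑ k, (ξ k : ℂ) * h k ξ = G ξ := by
    intro ξ
    have haG := sum_coord_smul_S G ξ
    have haw := sum_coord_smul_S w ξ
    rw [hG0, sub_zero] at haG
    rw [wbump_zero] at haw
    have e1 : ∑ k, (ξ k : ℂ) * h k ξ
        = w ξ * (∑ k, ξ k • a k ξ) - G ξ * (∑ k, ξ k • c k ξ) := by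
      rw [Finset.mul_sum, Finset.mul_sum, ← Finset.sum_sub_distrib]
      refine Finset.sum_congr rfl fun k _ => ?_
      rw [h_apply]
      have hsm : ∀ z : ℂ, (ξ k) • z = (ξ k : ℂ) * z := fun z => Complex.real_smul
      rw [hsm, hsm]
      ring
    rw [e1, ← haG, ← haw]
    ring
  let ψ : Fin d → 𝓢(EuclideanSpace ℝ (Fin d), ℂ) :=
    fun k => (2 * (π:ℂ) * Complex.I)⁻¹ • F.symm (h k)
  have hFψ : ∀ k, F (ψ k) = (2 * (π:ℂ) * Complex.I)⁻¹ • h k := by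
    intro k
    show F ((2 * (π:ℂ) * Complex.I)⁻¹ • F.symm (h k)) = _
    rw [_root_.map_smul, F.apply_symm_apply]
  refine ⟨ψ, fun x => ?_⟩
  have hΦ : (∑ k, pderivCLM ℝ (EuclideanSpace.single k (1:ℝ)) (ψ k)) = φ := by
    apply F.injective
    ext ξ
    rw [map_sum, schwartz_sum_apply]
    have hterm : ∀ k : Fin d,
        F (pderivCLM ℝ (EuclideanSpace.single k (1:ℝ)) (ψ k)) ξ = (ξ k : ℂ) * h k ξ := by
      intro k
      have e1 : F (pderivCLM ℝ (EuclideanSpace.single k (1:ℝ)) (ψ k)) ξ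
          = 𝓕 (⇑(pderivCLM ℝ (EuclideanSpace.single k (1:ℝ)) (ψ k))) ξ := by
        show (FourierTransform.fourierCLE ℂ 𝓢(EuclideanSpace ℝ (Fin d), ℂ) _) ξ = _
        rw [FourierTransform.fourierCLE_apply, SchwartzMap.fourier_coe]
      rw [e1, fourier_pderiv]
      have e2 : 𝓕 (⇑(ψ k)) ξ = (F (ψ k)) ξ := by
        show _ = (FourierTransform.fourierCLE ℂ 𝓢(EuclideanSpace ℝ (Fin d), ℂ) _) ξ
        rw [FourierTransform.fourierCLE_apply, SchwartzMap.fourier_coe]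
      have e3 : ⟪ξ, EuclideanSpace.single k (1:ℝ)⟫ = ξ k := by
        rw [EuclideanSpace.inner_single_right]
        simp
      rw [e2, hFψ k, e3]
      have e4 : ((2 * (π:ℂ) * Complex.I)⁻¹ • h k) ξ = (2 * (π:ℂ) * Complex.I)⁻¹ * h k ξ :=
        rfl
      rw [e4]
      field_simp
    rw [Finset.sum_congr rfl (fun k _ => hterm k), hk_eq ξ]
  rw [← hΦ]
  rw [schwartz_sum_apply]

end Stmt15

/-- Cohomological lemma, abelian case: a Schwartz function on `ℝⁿ` with zero integral is a
sum of coordinate derivatives of Schwartz functions. -/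
theorem stmt15 (n : ℕ) (φ : SchwartzMap (Fin n → ℝ) ℂ) (hφ : ∫ x, φ x = 0) :
    ∃ ψ : Fin n → SchwartzMap (Fin n → ℝ) ℂ,
      ∀ x, φ x = ∑ k, (LineDeriv.lineDerivOpCLM ℝ (SchwartzMap (Fin n → ℝ) ℂ) (Pi.single k 1 : Fin n → ℝ) :
        SchwartzMap (Fin n → ℝ) ℂ →L[ℝ] SchwartzMap (Fin n → ℝ) ℂ) (ψ k) x := by
  classical
  let e : EuclideanSpace ℝ (Fin n) ≃L[ℝ] (Fin n → ℝ) := EuclideanSpace.equiv (Fin n) ℝ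
  let φ' : SchwartzMap (EuclideanSpace ℝ (Fin n)) ℂ :=
    SchwartzMap.compCLMOfContinuousLinearEquiv ℝ e φ
  have hφ' : ∫ x, φ' x = 0 := by
    have hmp := EuclideanSpace.volume_preserving_symm_measurableEquiv_toLp (Fin n)
    have h1 : ∫ x : EuclideanSpace ℝ (Fin n), φ ((MeasurableEquiv.toLp 2 (Fin n → ℝ)).symm x)
        = ∫ y : Fin n → ℝ, φ y :=
      hmp.integral_comp (MeasurableEquiv.toLp 2 (Fin n → ℝ)).symm.measurableEmbedding ⇑φ
    have h2 : ∫ x, φ' x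
        = ∫ x : EuclideanSpace ℝ (Fin n), φ ((MeasurableEquiv.toLp 2 (Fin n → ℝ)).symm x) := rfl
    rw [h2, h1, hφ]
  obtain ⟨ψ', hψ'⟩ := Stmt15.euclid n φ' hφ'
  refine ⟨fun k => SchwartzMap.compCLMOfContinuousLinearEquiv ℝ e.symm (ψ' k), fun x => ?_⟩
  have hx : φ x = φ' (e.symm x) := by
    show φ x = φ (e (e.symm x))
    rw [e.apply_symm_apply]
  rw [hx, hψ' (e.symm x)]
  refine Finset.sum_congr rfl fun k _ => ?_
  rw [SchwartzMap.pderivCLM_apply, LineDeriv.lineDerivOpCLM_apply,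
    SchwartzMap.lineDerivOp_apply_eq_fderiv]
  have hcoe : ⇑(SchwartzMap.compCLMOfContinuousLinearEquiv ℝ e.symm (ψ' k))
      = ⇑(ψ' k) ∘ ⇑(e.symm) := rfl
  rw [hcoe, fderiv_comp x (ψ' k).differentiableAt e.symm.differentiableAt]
  rw [e.symm.fderiv]
  simp only [ContinuousLinearMap.coe_comp', Function.comp_apply, ContinuousLinearEquiv.coe_coe]
  rfl
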